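/- For integers N ≥ 2 and real d with 0 < d < 1/4, and for h ∈ {-1,1}, the sum ∑_{z=1}^{N-1} 1/(|z + hN|^{1-2d} z^{1-2d}) + ∑_{z=1}^{N-1} 1/(|{-z} + hN|^{1-2d} z^{1-2d}) is bounded by C N^{4d-1} for a constant C depending only on d. -/

import Mathlib

open Real

private lemma aux_sum_inv_rpow {e : ℝ} (he0 : 0 < e) (he1 : e < 1) (M : ℕ) :
    ∑ z ∈ Finset.Icc 1 M, 1 / (z : ℝ) ^ e ≤ (1 + 1 / (1 - e)) * (M : ℝ) ^ (1 - e) := by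
  have h1e : (0:ℝ) < 1 - e := by linarith
  induction M with
  | zero => simp [Real.zero_rpow (ne_of_gt h1e)]
  | succ M ih =>
    rw [Finset.sum_Icc_succ_top (by omega : 1 ≤ M + 1)]
    have ht : (0:ℝ) < (M:ℝ) + 1 := by positivity
    have ht1 : (1:ℝ) ≤ (M:ℝ) + 1 := by linarith [Nat.cast_nonneg (α := ℝ) M]
    set t : ℝ := (M:ℝ) + 1 with htdef
    have hs : -1 ≤ -1/t := by
      rw [neg_div, neg_le_neg_iff]
      exact div_le_one_of_le₀ ht1 ht.le
    have hb : (1 + (-1/t)) ^ (1-e) ≤ 1 + (1-e) * (-1/t) :=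
      rpow_one_add_le_one_add_mul_self hs (by linarith) (by linarith)
    have hM : (M:ℝ) = t * (1 + (-1/t)) := by
      field_simp
      rw [htdef]; ring
    have hnn : 0 ≤ 1 + (-1/t) := by
      rw [neg_div]
      have : 1/t ≤ 1 := div_le_one_of_le₀ ht1 ht.le
      linarith
    have hMe : (M:ℝ) ^ (1-e) ≤ t ^ (1-e) * (1 + (1-e) * (-1/t)) := by
      rw [hM, Real.mul_rpow ht.le hnn]
      exact mul_le_mul_of_nonneg_left hb (Real.rpow_nonneg ht.le _)
    have hte : t ^ (1-e) / t = t ^ (-e) := by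
      rw [show (1:ℝ) - e = 1 + (-e) by ring, Real.rpow_add ht, Real.rpow_one]
      field_simp
    have hMe' : (M:ℝ) ^ (1-e) ≤ t ^ (1-e) - (1-e) * t ^ (-e) := by
      calc (M:ℝ) ^ (1-e) ≤ t ^ (1-e) * (1 + (1-e) * (-1/t)) := hMe
        _ = t ^ (1-e) - (1-e) * (t ^ (1-e) / t) := by ring
        _ = t ^ (1-e) - (1-e) * t ^ (-e) := by rw [hte]
    have hcast : ((M + 1 : ℕ) : ℝ) = t := by push_cast; ring
    rw [hcast]
    have hterm : 1 / t ^ e = t ^ (-e) := by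
      rw [Real.rpow_neg ht.le, one_div]
    rw [hterm]
    have hC1 : 0 ≤ 1 + 1/(1-e) := by positivity
    have hC2 : (1:ℝ) ≤ (1 + 1/(1-e)) * (1-e) := by
      rw [add_mul, div_mul_cancel₀ _ (ne_of_gt h1e)]; linarith
    have htne : 0 ≤ t ^ (-e) := Real.rpow_nonneg ht.le _
    nlinarith [mul_le_mul_of_nonneg_left hMe' hC1]

private lemma aux_reflect (f : ℝ → ℝ) (N : ℕ) (hN : 1 ≤ N) :
    ∑ z ∈ Finset.Icc 1 (N - 1), f ((N : ℝ) - (z : ℕ)) =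
      ∑ z ∈ Finset.Icc 1 (N - 1), f (z : ℕ) := by
  refine Finset.sum_nbij' (fun z => N - z) (fun z => N - z) ?_ ?_ ?_ ?_ ?_
  · intro a ha; simp only [Finset.mem_Icc] at ha ⊢; omega
  · intro a ha; simp only [Finset.mem_Icc] at ha ⊢; omega
  · intro a ha; simp only [Finset.mem_Icc] at ha; omega
  · intro a ha; simp only [Finset.mem_Icc] at ha; omega
  · intro a ha
    simp only [Finset.mem_Icc] at ha
    congr 1
    have : a ≤ N := by omega
    push_cast [Nat.cast_sub this]
    ring

theorem shifted_convolution_sum_bound (d : ℝ) (hd0 : 0 < d) (hd : d < 1 / 4) :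
    ∃ C : ℝ, 0 < C ∧ ∀ N : ℕ, 2 ≤ N → ∀ h : ℤ, h ∈ ({-1, 1} : Set ℤ) →
      (∑ z ∈ Finset.Icc 1 (N - 1),
            1 / (|(z : ℝ) + h * N| ^ (1 - 2 * d) * (z : ℝ) ^ (1 - 2 * d)))
        + (∑ z ∈ Finset.Icc 1 (N - 1),
            1 / (|-(z : ℝ) + h * N| ^ (1 - 2 * d) * (z : ℝ) ^ (1 - 2 * d)))
        ≤ C * (N : ℝ) ^ (4 * d - 1) := by
  refine ⟨5 * (1 + 1 / (2 * d)), by positivity, ?_⟩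
  intro N hN2 h hh
  have he0 : (0:ℝ) < 1 - 2 * d := by linarith
  have he1 : (1:ℝ) - 2 * d < 1 := by linarith
  have hNpos : (0:ℝ) < N := by exact_mod_cast Nat.lt_of_lt_of_le (by norm_num) hN2
  have hNe : (0:ℝ) < (N:ℝ) ^ (1 - 2 * d) := Real.rpow_pos_of_pos hNpos _
  -- bound on the basic sum
  have hS : ∑ z ∈ Finset.Icc 1 (N - 1), 1 / (z : ℝ) ^ (1 - 2 * d)
      ≤ (1 + 1 / (2 * d)) * (N : ℝ) ^ (2 * d) := by
    have := aux_sum_inv_rpow he0 he1 (N - 1)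
    rw [show (1 - (1 - 2 * d)) = 2 * d by ring] at this
    refine this.trans ?_
    have hcast : ((N - 1 : ℕ) : ℝ) ≤ (N : ℝ) := by
      have : (N - 1 : ℕ) ≤ N := by omega
      exact_mod_cast this
    have hmono : ((N - 1 : ℕ) : ℝ) ^ (2 * d) ≤ (N : ℝ) ^ (2 * d) :=
      Real.rpow_le_rpow (Nat.cast_nonneg _) hcast (by linarith)
    have hC1 : (0:ℝ) ≤ 1 + 1 / (2 * d) := by positivity
    exact mul_le_mul_of_nonneg_left hmono hC1
  have hpow : (1 / (N:ℝ) ^ (1 - 2 * d)) * ((N : ℝ) ^ (2 * d)) = (N : ℝ) ^ (4 * d - 1) := by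
    rw [one_div, ← Real.rpow_neg hNpos.le, ← Real.rpow_add hNpos]
    ring_nf
  -- easy sum bound
  have hEasy : ∑ z ∈ Finset.Icc 1 (N - 1),
      1 / (((z : ℝ) + N) ^ (1 - 2 * d) * (z : ℝ) ^ (1 - 2 * d))
      ≤ (1 + 1 / (2 * d)) * (N : ℝ) ^ (4 * d - 1) := by
    have hterm : ∀ z ∈ Finset.Icc 1 (N - 1),
        1 / (((z : ℝ) + N) ^ (1 - 2 * d) * (z : ℝ) ^ (1 - 2 * d))
          ≤ (1 / (N:ℝ) ^ (1 - 2 * d)) * (1 / (z : ℝ) ^ (1 - 2 * d)) := by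
      intro z hz
      simp only [Finset.mem_Icc] at hz
      have hz1 : (1:ℝ) ≤ (z:ℝ) := by exact_mod_cast hz.1
      have hze : (0:ℝ) < (z:ℝ) ^ (1 - 2 * d) := Real.rpow_pos_of_pos (by linarith) _
      have h1 : (N:ℝ) ^ (1 - 2 * d) ≤ ((z : ℝ) + N) ^ (1 - 2 * d) :=
        Real.rpow_le_rpow hNpos.le (by linarith) (by linarith)
      rw [one_div_mul_one_div]
      exact one_div_le_one_div_of_le (mul_pos hNe hze)
        (mul_le_mul_of_nonneg_right h1 hze.le)
    calc ∑ z ∈ Finset.Icc 1 (N - 1),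
        1 / (((z : ℝ) + N) ^ (1 - 2 * d) * (z : ℝ) ^ (1 - 2 * d))
        ≤ ∑ z ∈ Finset.Icc 1 (N - 1),
            (1 / (N:ℝ) ^ (1 - 2 * d)) * (1 / (z : ℝ) ^ (1 - 2 * d)) :=
          Finset.sum_le_sum hterm
      _ = (1 / (N:ℝ) ^ (1 - 2 * d)) * ∑ z ∈ Finset.Icc 1 (N - 1),
            1 / (z : ℝ) ^ (1 - 2 * d) := by rw [Finset.mul_sum]
      _ ≤ (1 / (N:ℝ) ^ (1 - 2 * d)) * ((1 + 1 / (2 * d)) * (N : ℝ) ^ (2 * d)) :=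
          mul_le_mul_of_nonneg_left hS (by positivity)
      _ = (1 + 1 / (2 * d)) * (N : ℝ) ^ (4 * d - 1) := by
          rw [← hpow]; ring
  -- convolution sum bound
  have hConv : ∑ z ∈ Finset.Icc 1 (N - 1),
      1 / (((N : ℝ) - z) ^ (1 - 2 * d) * (z : ℝ) ^ (1 - 2 * d))
      ≤ 4 * (1 + 1 / (2 * d)) * (N : ℝ) ^ (4 * d - 1) := by
    have h2e : (0:ℝ) < (2:ℝ) ^ (1 - 2 * d) := Real.rpow_pos_of_pos two_pos _
    have hterm : ∀ z ∈ Finset.Icc 1 (N - 1),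
        1 / (((N : ℝ) - z) ^ (1 - 2 * d) * (z : ℝ) ^ (1 - 2 * d))
          ≤ ((2:ℝ) ^ (1 - 2 * d) / (N:ℝ) ^ (1 - 2 * d)) *
              (1 / (z : ℝ) ^ (1 - 2 * d) + 1 / ((N : ℝ) - z) ^ (1 - 2 * d)) := by
      intro z hz
      simp only [Finset.mem_Icc] at hz
      have hz1 : (1:ℝ) ≤ (z:ℝ) := by exact_mod_cast hz.1
      have hzN : (z:ℝ) ≤ (N:ℝ) - 1 := by
        have : (z:ℝ) ≤ ((N - 1 : ℕ) : ℝ) := by exact_mod_cast hz.2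
        have h2 : ((N - 1 : ℕ) : ℝ) = (N:ℝ) - 1 := by
          have : 1 ≤ N := by omega
          push_cast [Nat.cast_sub this]; ring
        linarith [h2 ▸ this]
      set a : ℝ := (z:ℝ) with hadef
      set b : ℝ := (N:ℝ) - z with hbdef
      have ha : 1 ≤ a := hz1
      have hb : 1 ≤ b := by rw [hbdef]; linarith
      have hab : a + b = N := by rw [hadef, hbdef]; ring
      have hae : (0:ℝ) < a ^ (1 - 2 * d) := Real.rpow_pos_of_pos (by linarith) _
      have hbe : (0:ℝ) < b ^ (1 - 2 * d) := Real.rpow_pos_of_pos (by linarith) _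
      have key : ∀ u v : ℝ, 1 ≤ u → 1 ≤ v → u + v = N → u ≤ v →
          1 / (v ^ (1 - 2 * d) * u ^ (1 - 2 * d))
            ≤ ((2:ℝ) ^ (1 - 2 * d) / (N:ℝ) ^ (1 - 2 * d)) * (1 / u ^ (1 - 2 * d)) := by
        intro u v hu hv huv huleq
        have hue : (0:ℝ) < u ^ (1 - 2 * d) := Real.rpow_pos_of_pos (by linarith) _
        have hve : (0:ℝ) < v ^ (1 - 2 * d) := Real.rpow_pos_of_pos (by linarith) _
        have hvhalf : (N:ℝ) / 2 ≤ v := by linarith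
        have hv2 : ((N:ℝ) / 2) ^ (1 - 2 * d) ≤ v ^ (1 - 2 * d) :=
          Real.rpow_le_rpow (by positivity) hvhalf (by linarith)
        have hdivpow : ((N:ℝ) / 2) ^ (1 - 2 * d)
            = (N:ℝ) ^ (1 - 2 * d) / (2:ℝ) ^ (1 - 2 * d) :=
          Real.div_rpow hNpos.le (by norm_num : (0:ℝ) ≤ 2) _
        have hlhs : 1 / (v ^ (1 - 2 * d) * u ^ (1 - 2 * d))
            ≤ 1 / (((N:ℝ) / 2) ^ (1 - 2 * d) * u ^ (1 - 2 * d)) := by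
          refine one_div_le_one_div_of_le (by positivity) ?_
          exact mul_le_mul_of_nonneg_right hv2 hue.le
        refine hlhs.trans_eq ?_
        rw [hdivpow]
        field_simp
      rcases le_total a b with hcase | hcase
      · have h0 := key a b ha hb hab hcase
        refine h0.trans ?_
        have hnn : (0:ℝ) ≤ ((2:ℝ) ^ (1 - 2 * d) / (N:ℝ) ^ (1 - 2 * d)) *
            (1 / b ^ (1 - 2 * d)) := by positivity
        rw [mul_add]; linarith
      · have h0 := key b a hb ha (by linarith) hcase
        have hnn : (0:ℝ) ≤ ((2:ℝ) ^ (1 - 2 * d) / (N:ℝ) ^ (1 - 2 * d)) *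
            (1 / a ^ (1 - 2 * d)) := by positivity
        calc 1 / (b ^ (1 - 2 * d) * a ^ (1 - 2 * d))
            = 1 / (a ^ (1 - 2 * d) * b ^ (1 - 2 * d)) := by rw [mul_comm]
          _ ≤ ((2:ℝ) ^ (1 - 2 * d) / (N:ℝ) ^ (1 - 2 * d)) * (1 / b ^ (1 - 2 * d)) := h0
          _ ≤ ((2:ℝ) ^ (1 - 2 * d) / (N:ℝ) ^ (1 - 2 * d)) *
              (1 / a ^ (1 - 2 * d) + 1 / b ^ (1 - 2 * d)) := by rw [mul_add]; linarith
    have hreflect : ∑ z ∈ Finset.Icc 1 (N - 1), 1 / ((N : ℝ) - z) ^ (1 - 2 * d)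
        = ∑ z ∈ Finset.Icc 1 (N - 1), 1 / (z : ℝ) ^ (1 - 2 * d) :=
      aux_reflect (fun x => 1 / x ^ (1 - 2 * d)) N (by omega)
    have h2le : (2:ℝ) ^ (1 - 2 * d) ≤ 2 := by
      calc (2:ℝ) ^ (1 - 2 * d) ≤ (2:ℝ) ^ (1:ℝ) :=
            Real.rpow_le_rpow_of_exponent_le one_le_two (by linarith)
        _ = 2 := Real.rpow_one 2
    calc ∑ z ∈ Finset.Icc 1 (N - 1),
        1 / (((N : ℝ) - z) ^ (1 - 2 * d) * (z : ℝ) ^ (1 - 2 * d))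
        ≤ ∑ z ∈ Finset.Icc 1 (N - 1),
            ((2:ℝ) ^ (1 - 2 * d) / (N:ℝ) ^ (1 - 2 * d)) *
              (1 / (z : ℝ) ^ (1 - 2 * d) + 1 / ((N : ℝ) - z) ^ (1 - 2 * d)) :=
          Finset.sum_le_sum hterm
      _ = ((2:ℝ) ^ (1 - 2 * d) / (N:ℝ) ^ (1 - 2 * d)) *
            ((∑ z ∈ Finset.Icc 1 (N - 1), 1 / (z : ℝ) ^ (1 - 2 * d)) +
             (∑ z ∈ Finset.Icc 1 (N - 1), 1 / ((N : ℝ) - z) ^ (1 - 2 * d))) := by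
          rw [← Finset.sum_add_distrib, Finset.mul_sum]
      _ = ((2:ℝ) ^ (1 - 2 * d) / (N:ℝ) ^ (1 - 2 * d)) *
            (2 * ∑ z ∈ Finset.Icc 1 (N - 1), 1 / (z : ℝ) ^ (1 - 2 * d)) := by
          rw [hreflect]; ring
      _ ≤ ((2:ℝ) ^ (1 - 2 * d) / (N:ℝ) ^ (1 - 2 * d)) *
            (2 * ((1 + 1 / (2 * d)) * (N : ℝ) ^ (2 * d))) := by
          refine mul_le_mul_of_nonneg_left ?_ (by positivity)
          linarith
      _ ≤ (2 / (N:ℝ) ^ (1 - 2 * d)) *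
            (2 * ((1 + 1 / (2 * d)) * (N : ℝ) ^ (2 * d))) := by
          gcongr
      _ = 4 * (1 + 1 / (2 * d)) *
            ((1 / (N:ℝ) ^ (1 - 2 * d)) * ((N : ℝ) ^ (2 * d))) := by ring
      _ = 4 * (1 + 1 / (2 * d)) * (N : ℝ) ^ (4 * d - 1) := by rw [hpow]
  -- abs rewriting depending on h
  simp only [Set.mem_insert_iff, Set.mem_singleton_iff] at hh
  have habs : ∀ z ∈ Finset.Icc 1 (N - 1),
      ((1:ℝ) ≤ (z:ℝ) ∧ (z:ℝ) ≤ (N:ℝ) - 1) := by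
    intro z hz
    simp only [Finset.mem_Icc] at hz
    constructor
    · exact_mod_cast hz.1
    · have h1 : 1 ≤ N := by omega
      have : (z:ℝ) ≤ ((N - 1 : ℕ) : ℝ) := by exact_mod_cast hz.2
      push_cast [Nat.cast_sub h1] at this
      linarith
  rcases hh with rfl | rfl
  · -- h = -1
    have e1 : ∑ z ∈ Finset.Icc 1 (N - 1),
        1 / (|(z : ℝ) + ((-1 : ℤ) : ℝ) * N| ^ (1 - 2 * d) * (z : ℝ) ^ (1 - 2 * d))
        = ∑ z ∈ Finset.Icc 1 (N - 1),
            1 / (((N : ℝ) - z) ^ (1 - 2 * d) * (z : ℝ) ^ (1 - 2 * d)) := by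
      refine Finset.sum_congr rfl fun z hz => ?_
      obtain ⟨hz1, hz2⟩ := habs z hz
      have : |(z : ℝ) + ((-1 : ℤ) : ℝ) * N| = (N : ℝ) - z := by
        push_cast
        rw [show (z:ℝ) + -1 * N = -((N:ℝ) - z) by ring, abs_neg, abs_of_nonneg (by linarith)]
      rw [this]
    have e2 : ∑ z ∈ Finset.Icc 1 (N - 1),
        1 / (|-(z : ℝ) + ((-1 : ℤ) : ℝ) * N| ^ (1 - 2 * d) * (z : ℝ) ^ (1 - 2 * d))
        = ∑ z ∈ Finset.Icc 1 (N - 1),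
            1 / (((z : ℝ) + N) ^ (1 - 2 * d) * (z : ℝ) ^ (1 - 2 * d)) := by
      refine Finset.sum_congr rfl fun z hz => ?_
      obtain ⟨hz1, hz2⟩ := habs z hz
      have : |-(z : ℝ) + ((-1 : ℤ) : ℝ) * N| = (z : ℝ) + N := by
        push_cast
        rw [show -(z:ℝ) + -1 * N = -((z:ℝ) + N) by ring, abs_neg,
          abs_of_nonneg (by linarith)]
      rw [this]
    rw [e1, e2]
    linarith
  · -- h = 1
    have e1 : ∑ z ∈ Finset.Icc 1 (N - 1),
        1 / (|(z : ℝ) + ((1 : ℤ) : ℝ) * N| ^ (1 - 2 * d) * (z : ℝ) ^ (1 - 2 * d))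
        = ∑ z ∈ Finset.Icc 1 (N - 1),
            1 / (((z : ℝ) + N) ^ (1 - 2 * d) * (z : ℝ) ^ (1 - 2 * d)) := by
      refine Finset.sum_congr rfl fun z hz => ?_
      obtain ⟨hz1, hz2⟩ := habs z hz
      have : |(z : ℝ) + ((1 : ℤ) : ℝ) * N| = (z : ℝ) + N := by
        push_cast
        rw [one_mul, abs_of_nonneg (by linarith)]
      rw [this]
    have e2 : ∑ z ∈ Finset.Icc 1 (N - 1),
        1 / (|-(z : ℝ) + ((1 : ℤ) : ℝ) * N| ^ (1 - 2 * d) * (z : ℝ) ^ (1 - 2 * d))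
        = ∑ z ∈ Finset.Icc 1 (N - 1),
            1 / (((N : ℝ) - z) ^ (1 - 2 * d) * (z : ℝ) ^ (1 - 2 * d)) := by
      refine Finset.sum_congr rfl fun z hz => ?_
      obtain ⟨hz1, hz2⟩ := habs z hz
      have : |-(z : ℝ) + ((1 : ℤ) : ℝ) * N| = (N : ℝ) - z := by
        push_cast
        rw [show -(z:ℝ) + 1 * N = (N:ℝ) - z by ring, abs_of_nonneg (by linarith)]
      rw [this]
    rw [e1, e2]
    linarith
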